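/- Let k be an algebraically closed field of characteristic zero, and let L_1, ..., L_d (d ≥ 2) be pairwise linearly independent linear forms in R = k[x_0,...,x_n] with n ≥ 2. Let J be the Jacobian ideal of F = L_1 ⋯ L_d. Then the radical of J equals the intersection over all pairs i < j of the ideals (L_i, L_j). -/

import Mathlib

open MvPolynomial

section Aux

variable {R : Type*} [CommRing R] {σ : Type*}


lemma pderiv_finset_prod {ι : Type*} [DecidableEq ι] (m : σ) (s : Finset ι)
    (f : ι → MvPolynomial σ R) :
    pderiv m (∏ i ∈ s, f i) = ∑ i ∈ s, pderiv m (f i) * ∏ j ∈ s.erase i, f j := by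
  classical
  induction s using Finset.induction_on with
  | empty => simp
  | @insert a s ha ih =>
    rw [Finset.prod_insert ha, pderiv_mul, ih, Finset.sum_insert ha, Finset.erase_insert ha,
      Finset.mul_sum]
    congr 1
    refine Finset.sum_congr rfl fun i hi => ?_
    rw [Finset.erase_insert_of_ne (by rintro rfl; exact ha hi),
      Finset.prod_insert (fun h => ha (Finset.erase_subset _ _ h))]
    ring

lemma degree_eq_one_exists {d : σ →₀ ℕ} (hd : d.degree = 1) : ∃ i, d = Finsupp.single i 1 := by
  classical
  have hne : d.support.Nonempty := by
    rcases Finset.eq_empty_or_nonempty d.support with h | h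
    · rw [Finsupp.support_eq_empty] at h
      subst h
      simp [map_zero] at hd
    · exact h
  obtain ⟨j, hj⟩ := hne
  have hdj : d j = 1 := le_antisymm
    (hd ▸ Finset.single_le_sum (fun i _ => Nat.zero_le _) hj)
    (Nat.one_le_iff_ne_zero.2 (Finsupp.mem_support_iff.1 hj))
  refine ⟨j, Finsupp.ext fun s => ?_⟩
  rcases eq_or_ne s j with rfl | hs
  · simp [hdj]
  · rw [Finsupp.single_apply, if_neg (fun h => hs (h.symm))]
    by_contra hds
    have hs' : s ∈ d.support := Finsupp.mem_support_iff.2 hds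
    have h2 : d j + d s ≤ d.degree := by
      rw [Finsupp.degree, ← Finset.sum_pair (a := j) (b := s) (fun h => hs h.symm)]
      refine Finset.sum_le_sum_of_subset ?_
      intro x hx
      rcases Finset.mem_insert.1 hx with rfl | hx
      · exact hj
      · rwa [Finset.mem_singleton.1 hx]
    have : 1 ≤ d s := Nat.one_le_iff_ne_zero.2 hds
    omega

lemma degree_single_one (i : σ) : (Finsupp.single i 1 : σ →₀ ℕ).degree = 1 := by
  classical
  exact Finsupp.degree_single i 1

lemma hom1_eq_sum [Fintype σ] [DecidableEq σ] {φ : MvPolynomial σ R} (h : φ.IsHomogeneous 1) :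
    φ = ∑ i, (C (coeff (Finsupp.single i 1) φ) : MvPolynomial σ R) * X i := by
  apply MvPolynomial.ext
  intro d
  rw [coeff_sum]
  simp only [coeff_C_mul, coeff_X']
  rcases eq_or_ne d.degree 1 with hd | hd
  · obtain ⟨j, rfl⟩ := degree_eq_one_exists hd
    rw [Finset.sum_eq_single j]
    · rw [if_pos rfl, mul_one]
    · intro i _ hij
      rw [if_neg (fun hs => hij ((Finsupp.single_left_inj one_ne_zero).1 hs)), mul_zero]
    · intro hj
      exact absurd (Finset.mem_univ j) hj
  · rw [h.coeff_eq_zero hd]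
    refine (Finset.sum_eq_zero fun i _ => ?_).symm
    rw [if_neg (fun hs : Finsupp.single i 1 = d => hd (hs ▸ degree_single_one i)), mul_zero]

lemma hom1_pderiv [Fintype σ] [DecidableEq σ] {φ : MvPolynomial σ R} (h : φ.IsHomogeneous 1)
    (m : σ) : pderiv m φ = C (coeff (Finsupp.single m 1) φ) := by
  conv_lhs => rw [hom1_eq_sum h]
  rw [map_sum, Finset.sum_eq_single m]
  · rw [pderiv_C_mul, pderiv_X_self, mul_one]
  · intro i _ him
    rw [pderiv_C_mul, pderiv_X_of_ne him, mul_zero]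
  · intro hm
    exact absurd (Finset.mem_univ m) hm

lemma euler [Fintype σ] [DecidableEq σ] {φ : MvPolynomial σ R} {m : ℕ} (h : φ.IsHomogeneous m) :
    ∑ i, X i * pderiv i φ = (m : MvPolynomial σ R) * φ := by
  have key : ∀ d : σ →₀ ℕ, d.degree = m → ∀ a : R,
      ∑ i, X i * pderiv i (monomial d a) = (m : MvPolynomial σ R) * monomial d a := by
    intro d hd a
    have h1 : ∀ i : σ, X i * pderiv i (monomial d a) = monomial d (a * d i) := by
      intro i
      rcases Nat.eq_zero_or_pos (d i) with h0 | h0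
      · rw [pderiv_monomial, h0]
        simp
      · rw [pderiv_monomial, X, monomial_mul, one_mul,
          add_tsub_cancel_of_le (Finsupp.single_le_iff.2 h0)]
    rw [Finset.sum_congr rfl fun i _ => h1 i, ← map_sum, ← Finset.mul_sum]
    have hnat : ∑ i : σ, d i = m := by
      rw [← hd, Finsupp.degree]
      exact (Finset.sum_subset (Finset.subset_univ _)
        (fun x _ hx => by simpa using Finsupp.notMem_support_iff.1 hx)).symm
    have h2 : ∑ i : σ, ((d i : R)) = (m : R) := by
      rw [← Nat.cast_sum, hnat]
    rw [h2, show ((m : MvPolynomial σ R)) = C (m : R) by simp, C_mul_monomial, mul_comm]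
  conv_lhs => rw [← support_sum_monomial_coeff φ]
  conv_rhs => rw [← support_sum_monomial_coeff φ]
  simp only [map_sum, Finset.mul_sum]
  rw [Finset.sum_comm]
  refine Finset.sum_congr rfl fun d hd => ?_
  have hdm : d.degree = m := by
    by_contra hdm
    exact (mem_support_iff.1 hd) (h.coeff_eq_zero hdm)
  exact key d hdm _

lemma span_X_pair_isPrime [IsDomain R] [DecidableEq σ] {u v : σ} (huv : u ≠ v) :
    (Ideal.span {(X u : MvPolynomial σ R), X v}).IsPrime := by
  set g : σ → MvPolynomial σ R := fun i => if i = u ∨ i = v then 0 else X i with hg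
  have hker : Ideal.span {(X u : MvPolynomial σ R), X v} = RingHom.ker (aeval g : MvPolynomial σ R →ₐ[R] MvPolynomial σ R) := by
    apply le_antisymm
    · rw [Ideal.span_le]
      rintro x (rfl | rfl)
      · simp [RingHom.mem_ker, hg]
      · simp [RingHom.mem_ker, hg]
    · intro φ hφ
      rw [RingHom.mem_ker] at hφ
      have hrepr : aeval g φ = ∑ d ∈ φ.support.filter (fun d => d u = 0 ∧ d v = 0),
          monomial d (coeff d φ) := by
        rw [aeval_def, eval₂_eq, ← Finset.sum_filter_add_sum_filter_not φ.support
          (fun d => d u = 0 ∧ d v = 0)]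
        have h1 : ∀ d ∈ φ.support.filter (fun d => d u = 0 ∧ d v = 0),
            (algebraMap R _) (coeff d φ) * ∏ i ∈ d.support, g i ^ d i
              = monomial d (coeff d φ) := by
          intro d hd
          obtain ⟨hd1, hdu, hdv⟩ := Finset.mem_filter.1 hd |>.imp id id
          have : ∀ i ∈ d.support, g i ^ d i = X i ^ d i := by
            intro i hi
            have hiu : i ≠ u := fun h => (Finsupp.mem_support_iff.1 hi) (h ▸ hdu)
            have hiv : i ≠ v := fun h => (Finsupp.mem_support_iff.1 hi) (h ▸ hdv)
            rw [hg]
            simp [hiu, hiv]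
          rw [Finset.prod_congr rfl this, algebraMap_eq, monomial_eq, Finsupp.prod]
        have h2 : ∀ d ∈ φ.support.filter (fun d => ¬(d u = 0 ∧ d v = 0)),
            (algebraMap R _) (coeff d φ) * ∏ i ∈ d.support, g i ^ d i = 0 := by
          intro d hd
          obtain ⟨-, hd2⟩ := Finset.mem_filter.1 hd
          have hgu : g u = 0 := by simp [hg]
          have hgv : g v = 0 := by simp [hg]
          rcases not_and_or.1 hd2 with h0 | h0
          · rw [Finset.prod_eq_zero (Finsupp.mem_support_iff.2 h0)
              (by rw [hgu, zero_pow h0]), mul_zero]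
          · rw [Finset.prod_eq_zero (Finsupp.mem_support_iff.2 h0)
              (by rw [hgv, zero_pow h0]), mul_zero]
        rw [Finset.sum_congr rfl h1, Finset.sum_congr rfl h2, Finset.sum_const_zero, add_zero]
      rw [show ({(X u : MvPolynomial σ R), X v} : Set _) = X '' {u, v} by
        rw [Set.image_pair], mem_ideal_span_X_image]
      intro m hm
      by_contra hcon
      push_neg at hcon
      have hmu : m u = 0 := hcon u (by simp)
      have hmv : m v = 0 := hcon v (by simp)
      have : coeff m (aeval g φ) = coeff m φ := by
        rw [hrepr, coeff_sum]
        simp only [coeff_monomial]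
        rw [Finset.sum_ite_eq' (φ.support.filter fun d => d u = 0 ∧ d v = 0) m
          (fun d => coeff d φ), if_pos]
        exact Finset.mem_filter.2 ⟨hm, hmu, hmv⟩
      rw [hφ] at this
      exact (mem_support_iff.1 hm) (by rw [← this, coeff_zero])
  rw [hker]
  exact RingHom.ker_isPrime _

noncomputable def linForm (R : Type*) [CommRing R] (σ : Type*) [Fintype σ] [DecidableEq σ] :
    (σ → R) →ₗ[R] MvPolynomial σ R where
  toFun v := ∑ i, C (v i) * X i
  map_add' x y := by simp [add_mul, Finset.sum_add_distrib]
  map_smul' c x := by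
    simp [Finset.mul_sum, smul_eq_C_mul, mul_assoc]

lemma linForm_apply [Fintype σ] [DecidableEq σ] (v : σ → R) :
    linForm R σ v = ∑ i, C (v i) * X i := rfl

lemma linForm_single [Fintype σ] [DecidableEq σ] (m : σ) :
    linForm R σ (Pi.single m 1) = X m := by
  rw [linForm_apply, Finset.sum_eq_single m]
  · simp
  · intro i _ him
    simp [Pi.single_eq_of_ne him]
  · intro hm
    exact absurd (Finset.mem_univ m) hm

lemma linForm_coeffs [Fintype σ] [DecidableEq σ] {φ : MvPolynomial σ R}
    (h : φ.IsHomogeneous 1) : linForm R σ (fun m => coeff (Finsupp.single m 1) φ) = φ :=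
  (hom1_eq_sum h).symm

theorem span_pair_isPrime {k : Type*} [Field k] {n : ℕ} (hn : 2 ≤ n)
    {L1 L2 : MvPolynomial (Fin (n + 1)) k} (h1 : L1.IsHomogeneous 1) (h2 : L2.IsHomogeneous 1)
    (hind : LinearIndependent k ![L1, L2]) : (Ideal.span {L1, L2}).IsPrime := by
  classical
  have h01 : (0 : Fin (n + 1)) ≠ 1 := by
    have h1n : 1 < n + 1 := by omega
    exact Fin.ne_of_val_ne (by simp [Fin.val_one', Nat.mod_eq_of_lt h1n])
  set v1 : Fin (n + 1) → k := fun m => coeff (Finsupp.single m 1) L1 with hv1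
  set v2 : Fin (n + 1) → k := fun m => coeff (Finsupp.single m 1) L2 with hv2
  have hL1 : linForm k _ v1 = L1 := linForm_coeffs h1
  have hL2 : linForm k _ v2 = L2 := linForm_coeffs h2
  have hvind : LinearIndependent k ![v1, v2] := by
    rw [LinearIndependent.pair_iff]
    intro s t hst
    have hmap : s • L1 + t • L2 = 0 := by
      rw [← hL1, ← hL2, ← map_smul, ← map_smul, ← map_add, hst, map_zero]
    exact LinearIndependent.pair_iff.1 hind s t hmap
  have hne12 : v1 ≠ v2 := by
    intro h
    have h2' := hvind.injective (show ![v1, v2] 0 = ![v1, v2] 1 by simpa using h)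
    exact absurd h2' (by decide)
  set s : Set (Fin (n + 1) → k) := Set.range ![v1, v2] with hsdef
  have hs : LinearIndependent k ((↑) : s → (Fin (n + 1) → k)) := (linearIndepOn_id_range_iff hvind.injective).2 hvind
  set t := LinearIndepOn.extend (show LinearIndepOn k id s from hs) (Set.subset_univ s) with htdef
  have hts : s ⊆ t := LinearIndepOn.subset_extend (show LinearIndepOn k id s from hs) _
  have hv1t : v1 ∈ t := hts ⟨0, rfl⟩
  have hv2t : v2 ∈ t := hts ⟨1, rfl⟩
  let b0 : Module.Basis t k (Fin (n + 1) → k) := Module.Basis.extend (show LinearIndepOn k id s from hs)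
  haveI : Fintype t := FiniteDimensional.fintypeBasisIndex b0
  have hcard : Fintype.card t = n + 1 := by
    rw [← Module.finrank_eq_card_basis b0, Module.finrank_fintype_fun_eq_card,
      Fintype.card_fin]
  let e0 : Fin (n + 1) ≃ t := (Fintype.equivFinOfCardEq hcard).symm
  let a : Fin (n + 1) := e0.symm ⟨v1, hv1t⟩
  let e1 : Fin (n + 1) ≃ t := (Equiv.swap 0 a).trans e0
  have he1 : e1 0 = ⟨v1, hv1t⟩ := by
    simp only [e1, Equiv.trans_apply, Equiv.swap_apply_left, a]
    exact e0.apply_symm_apply _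
  let bb : Fin (n + 1) := e1.symm ⟨v2, hv2t⟩
  have hbb : bb ≠ 0 := by
    intro h
    apply hne12
    have h3 : e1 bb = ⟨v2, hv2t⟩ := e1.apply_symm_apply _
    rw [h, he1] at h3
    exact congrArg Subtype.val h3
  let e2 : Fin (n + 1) ≃ t := (Equiv.swap 1 bb).trans e1
  have he2a : e2 0 = ⟨v1, hv1t⟩ := by
    have h0 : (Equiv.swap (1 : Fin (n + 1)) bb) 0 = 0 :=
      Equiv.swap_apply_of_ne_of_ne h01 (Ne.symm hbb)
    simp only [e2, Equiv.trans_apply, h0, he1]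
  have he2b : e2 1 = ⟨v2, hv2t⟩ := by
    simp only [e2, Equiv.trans_apply, Equiv.swap_apply_left, bb]
    exact e1.apply_symm_apply _
  let b : Module.Basis (Fin (n + 1)) k (Fin (n + 1) → k) := b0.reindex e2.symm
  have hbap : ∀ m, b m = (b0 (e2 m) : Fin (n + 1) → k) := by
    intro m
    rw [Module.Basis.reindex_apply, Equiv.symm_symm]
  have hb0 : b 0 = v1 := by rw [hbap, he2a, Module.Basis.extend_apply_self]
  have hb1 : b 1 = v2 := by rw [hbap, he2b, Module.Basis.extend_apply_self]
  -- the algebra endomorphisms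
  let F : MvPolynomial (Fin (n + 1)) k →ₐ[k] MvPolynomial (Fin (n + 1)) k :=
    aeval (fun m => linForm k _ (b m))
  let r : Fin (n + 1) → Fin (n + 1) → k := fun m s' => b.repr (Pi.single m 1) s'
  let G : MvPolynomial (Fin (n + 1)) k →ₐ[k] MvPolynomial (Fin (n + 1)) k :=
    aeval (fun m => linForm k _ (r m))
  have happF : ∀ (v : Fin (n + 1) → k), F (linForm k _ v) = linForm k _ (∑ u, v u • b u) := by
    intro v
    rw [linForm_apply, map_sum, map_sum]
    refine Finset.sum_congr rfl fun u _ => ?_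
    rw [map_mul, aeval_C, aeval_X, map_smul]
    exact (Algebra.smul_def _ _).symm
  have happG : ∀ (v : Fin (n + 1) → k), G (linForm k _ v) = linForm k _ (∑ u, v u • r u) := by
    intro v
    rw [linForm_apply, map_sum, map_sum]
    refine Finset.sum_congr rfl fun u _ => ?_
    rw [map_mul, aeval_C, aeval_X, map_smul]
    exact (Algebra.smul_def _ _).symm
  have hFG : F.comp G = AlgHom.id k _ := by
    apply MvPolynomial.algHom_ext
    intro m
    rw [AlgHom.comp_apply, AlgHom.id_apply, aeval_X, happF]
    have : ∑ u, r m u • b u = Pi.single m 1 := b.sum_repr (Pi.single m 1)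
    rw [this, linForm_single]
  have hGF : G.comp F = AlgHom.id k _ := by
    apply MvPolynomial.algHom_ext
    intro m
    rw [AlgHom.comp_apply, AlgHom.id_apply, aeval_X, happG]
    let rho : (Fin (n + 1) → k) →ₗ[k] (Fin (n + 1) → k) :=
      { toFun := fun x s' => b.repr x s'
        map_add' := by intro x y; funext s'; simp
        map_smul' := by intro c x; funext s'; simp }
    have hkey : ∑ u, b m u • r u = Pi.single m 1 := by
      have h5 : ∀ u : Fin (n + 1), b m u • (Pi.single u 1 : Fin (n + 1) → k) =
          Pi.single u (b m u) := by
        intro u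
        rw [← Pi.single_smul, smul_eq_mul, mul_one]
      have h4 : ∑ u, b m u • (Pi.single u 1 : Fin (n + 1) → k) = b m := by
        rw [Finset.sum_congr rfl fun u _ => h5 u, Finset.univ_sum_single]
      have h6 : ∑ u, b m u • r u = rho (∑ u, b m u • (Pi.single u 1 : Fin (n + 1) → k)) := by
        rw [map_sum]
        refine Finset.sum_congr rfl fun u _ => ?_
        rw [map_smul]
        rfl
      rw [h6, h4]
      funext s'
      show (b.repr (b m)) s' = (Pi.single m 1 : Fin (n + 1) → k) s'
      rw [show b.repr (b m) = Finsupp.single m 1 from b.repr_self m,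
        Finsupp.single_apply, Pi.single_apply]
      by_cases h : m = s' <;> simp [h, eq_comm]
    rw [hkey, linForm_single]
  let Φ := AlgEquiv.ofAlgHom F G hFG hGF
  have hΦ0 : Φ (X 0) = L1 := by
    show F (X 0) = L1
    rw [aeval_X, hb0]
    exact hL1
  have hΦ1 : Φ (X 1) = L2 := by
    show F (X 1) = L2
    rw [aeval_X, hb1]
    exact hL2
  have hspan : Ideal.span {L1, L2} =
      Ideal.map Φ (Ideal.span {(X 0 : MvPolynomial (Fin (n + 1)) k), X 1}) := by
    rw [Ideal.map_span, Set.image_pair, hΦ0, hΦ1]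
  rw [hspan]
  haveI := span_X_pair_isPrime (R := k) h01
  infer_instance

end Aux

/-- Over an algebraically closed field of characteristic zero, the radical of the
Jacobian ideal of a product of `d ≥ 2` pairwise independent linear forms equals the
intersection over pairs `i < j` of the ideals `(L i, L j)`. -/
theorem radical_jacobian_eq_inf_pairs
    {k : Type*} [Field k] [IsAlgClosed k] [CharZero k] (n d : ℕ) (hn : 2 ≤ n) (hd : 2 ≤ d)
    (L : Fin d → MvPolynomial (Fin (n + 1)) k)
    (hdeg : ∀ i, (L i).IsHomogeneous 1)
    (hind : ∀ i j, i ≠ j → LinearIndependent k ![L i, L j]) :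
    (Ideal.span (Set.range fun i => pderiv i (∏ i, L i))).radical =
      ⨅ (i : Fin d) (j : Fin d) (_ : i < j), Ideal.span {L i, L j} := by
  classical
  set F : MvPolynomial (Fin (n + 1)) k := ∏ i, L i with hF
  set J : Ideal (MvPolynomial (Fin (n + 1)) k) :=
    Ideal.span (Set.range fun i => pderiv i F) with hJ
  have hFhom : F.IsHomogeneous d := by
    have := MvPolynomial.IsHomogeneous.prod Finset.univ L (fun _ => 1) (fun i _ => hdeg i)
    simpa using this
  have hLne : ∀ i, L i ≠ 0 := by
    intro i
    obtain ⟨j, hj⟩ : ∃ j : Fin d, j ≠ i := by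
      rcases eq_or_ne i ⟨0, by omega⟩ with rfl | hi
      · exact ⟨⟨1, by omega⟩, by simp [Fin.ext_iff]⟩
      · exact ⟨⟨0, by omega⟩, Ne.symm hi⟩
    have := (hind i j (Ne.symm hj)).ne_zero 0
    simpa using this
  have hJle : ∀ i j : Fin d, i ≠ j → J ≤ Ideal.span {L i, L j} := by
    intro i j hij
    rw [hJ, Ideal.span_le]
    rintro x ⟨m, rfl⟩
    simp only
    rw [hF, pderiv_finset_prod]
    apply Ideal.sum_mem
    intro t _
    rcases eq_or_ne t i with rfl | hti
    · have hjmem : j ∈ Finset.univ.erase t := Finset.mem_erase.2 ⟨Ne.symm hij, Finset.mem_univ j⟩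
      obtain ⟨c, hc⟩ := Finset.dvd_prod_of_mem L hjmem
      rw [hc]
      exact Ideal.mul_mem_left _ _ (Ideal.mul_mem_right _ _
        (Ideal.subset_span (Set.mem_insert_of_mem _ rfl)))
    · have himem : i ∈ Finset.univ.erase t := Finset.mem_erase.2 ⟨Ne.symm hti, Finset.mem_univ i⟩
      obtain ⟨c, hc⟩ := Finset.dvd_prod_of_mem L himem
      rw [hc]
      exact Ideal.mul_mem_left _ _ (Ideal.mul_mem_right _ _
        (Ideal.subset_span (Set.mem_insert _ _)))
  refine le_antisymm ?_ ?_
  · refine le_iInf fun i => le_iInf fun j => le_iInf fun hij => ?_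
    have hp := span_pair_isPrime hn (hdeg i) (hdeg j) (hind i j hij.ne)
    exact hp.radical_le_iff.2 (hJle i j hij.ne)
  · rw [← vanishingIdeal_zeroLocus_eq_radical (K := k)]
    intro f hf
    rw [mem_vanishingIdeal_iff]
    intro p hp
    have hgen : ∀ m : Fin (n + 1), eval p (pderiv m F) = 0 := fun m =>
      hp _ (Ideal.subset_span ⟨m, rfl⟩)
    have hFp : eval p F = 0 := by
      have he := congrArg (eval p) (euler hFhom)
      rw [map_sum, map_mul, map_natCast] at he
      simp only [map_mul, eval_X, hgen, mul_zero, Finset.sum_const_zero] at he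
      have hd0 : ((d : k)) ≠ 0 := Nat.cast_ne_zero.2 (by omega)
      exact (mul_eq_zero.1 he.symm).resolve_left hd0
    obtain ⟨i, -, hi⟩ := Finset.prod_eq_zero_iff.1 (by rwa [hF, map_prod] at hFp)
    have hex2 : ∃ j, j ≠ i ∧ eval p (L j) = 0 := by
      by_contra hcon
      push_neg at hcon
      have hder : ∀ m, eval p (pderiv m (L i)) = 0 := by
        intro m
        have h0 := hgen m
        rw [hF, pderiv_finset_prod, map_sum] at h0
        have hred : ∀ t ∈ Finset.univ, t ≠ i →
            eval p (pderiv m (L t) * ∏ s ∈ Finset.univ.erase t, L s) = 0 := by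
          intro t _ hti
          rw [map_mul, map_prod, Finset.prod_eq_zero
            (Finset.mem_erase.2 ⟨Ne.symm hti, Finset.mem_univ i⟩) hi, mul_zero]
        rw [Finset.sum_eq_single i (fun t ht hti => hred t ht hti)
          (fun h => absurd (Finset.mem_univ i) h), map_mul, map_prod] at h0
        have hprodne : ∏ s ∈ Finset.univ.erase i, eval p (L s) ≠ 0 := by
          rw [Finset.prod_ne_zero_iff]
          intro s hs
          exact hcon s (Finset.mem_erase.1 hs).1
        exact (mul_eq_zero.1 h0).resolve_right hprodne
      apply hLne i
      rw [hom1_eq_sum (hdeg i)]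
      refine Finset.sum_eq_zero fun m _ => ?_
      have hm := hder m
      rw [hom1_pderiv (hdeg i) m, eval_C] at hm
      rw [hm, map_zero, zero_mul]
    obtain ⟨j, hji, hj⟩ := hex2
    have hmem : ∀ a b : Fin d, a < b → f ∈ Ideal.span {L a, L b} := by
      intro a b hab
      exact Ideal.mem_iInf.1 (Ideal.mem_iInf.1 (Ideal.mem_iInf.1 hf a) b) hab
    have key : ∀ a b : Fin d, eval p (L a) = 0 → eval p (L b) = 0 →
        f ∈ Ideal.span {L a, L b} → eval p f = 0 := by
      intro a b ha hb hfm
      have hle : Ideal.span {L a, L b} ≤ RingHom.ker (eval p) := by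
        rw [Ideal.span_le]
        rintro x (rfl | rfl)
        · simpa [RingHom.mem_ker] using ha
        · simpa [RingHom.mem_ker] using hb
      exact hle hfm
    rcases lt_or_gt_of_ne hji with h | h
    · exact key j i hj hi (hmem j i h)
    · exact key i j hi hj (hmem i j h)
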